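/- Let m ∈ ℕ, let A = (a_{ij}) be a dense symmetric m×m matrix with nonnegative real entries, and let u be optimal for A. Then: (a) a_{ij} > 0 for all 1 ≤ i < j ≤ m; (b) u_i > 0 for every i ∈ [m]; (c) ∑_{i ∈ [m], i ≠ j} a_{ij}·u_i = g(A) for every j ∈ [m]. -/

import Mathlib

open Finset
open scoped Classical

/-- The Lagrangian-type quantity
`g(A) = max { uᵀAu : u_i ≥ 0, ∑ u_i = 1 }`. -/
noncomputable def lagrangian {ι : Type} [Fintype ι] (A : ι → ι → ℝ) : ℝ :=
  sSup {x : ℝ | ∃ u : ι → ℝ, (∀ i, 0 ≤ u i) ∧ (∑ i, u i = 1) ∧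
    x = ∑ i, ∑ j, u i * A i j * u j}

/-- `A` is dense: zero diagonal, and deleting any row and the corresponding
column strictly decreases `g`. -/
def IsDenseMatrix {ι : Type} [Fintype ι] (A : ι → ι → ℝ) : Prop :=
  (∀ i, A i i = 0) ∧
  ∀ i : ι, lagrangian (fun a b : {j : ι // j ≠ i} => A a b) < lagrangian A

lemma lag_bddAbove {ι : Type} [Fintype ι] (A : ι → ι → ℝ) :
    BddAbove {x : ℝ | ∃ u : ι → ℝ, (∀ i, 0 ≤ u i) ∧ (∑ i, u i = 1) ∧
      x = ∑ i, ∑ j, u i * A i j * u j} := by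
  refine ⟨∑ i, ∑ j, |A i j|, ?_⟩
  rintro x ⟨u, h0, h1, rfl⟩
  refine Finset.sum_le_sum fun i _ => Finset.sum_le_sum fun j _ => ?_
  have hui : u i ≤ 1 := h1 ▸ Finset.single_le_sum (fun k _ => h0 k) (mem_univ i)
  have huj : u j ≤ 1 := h1 ▸ Finset.single_le_sum (fun k _ => h0 k) (mem_univ j)
  calc u i * A i j * u j ≤ |u i * A i j * u j| := le_abs_self _
    _ = u i * |A i j| * u j := by
        rw [abs_mul, abs_mul, abs_of_nonneg (h0 i), abs_of_nonneg (h0 j)]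
    _ ≤ |A i j| * u j :=
        mul_le_mul_of_nonneg_right (mul_le_of_le_one_left (abs_nonneg _) hui) (h0 j)
    _ ≤ |A i j| * 1 := mul_le_mul_of_nonneg_left huj (abs_nonneg _)
    _ = |A i j| := mul_one _

lemma le_lag {ι : Type} [Fintype ι] (A : ι → ι → ℝ) (u : ι → ℝ)
    (h0 : ∀ i, 0 ≤ u i) (h1 : ∑ i, u i = 1) :
    (∑ i, ∑ j, u i * A i j * u j) ≤ lagrangian A :=
  le_csSup (lag_bddAbove A) ⟨u, h0, h1, rfl⟩

lemma sum_perturb {m : ℕ} (f g : Fin m → ℝ) (j k : Fin m) (ε : ℝ) :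
    ∑ l, (f l + (if l = j then ε else 0) - (if l = k then ε else 0)) * g l
      = (∑ l, f l * g l) + ε * g j - ε * g k := by
  simp [add_mul, sub_mul, Finset.sum_add_distrib, Finset.sum_sub_distrib, ite_mul,
    Finset.sum_ite_eq', Finset.mem_univ]

lemma q_perturb {m : ℕ} (A : Fin m → Fin m → ℝ)
    (hsymm : ∀ i j, A i j = A j i) (hdiag : ∀ i, A i i = 0)
    (u : Fin m → ℝ) (j k : Fin m) (ε : ℝ) :
    ∑ i, ∑ l, (u i + (if i = j then ε else 0) - (if i = k then ε else 0)) * A i l *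
        (u l + (if l = j then ε else 0) - (if l = k then ε else 0))
      = (∑ i, ∑ l, u i * A i l * u l)
        + 2 * ε * ((∑ i, u i * A i j) - (∑ i, u i * A i k)) - 2 * ε ^ 2 * A j k := by
  set w : Fin m → ℝ :=
    fun l => u l + (if l = j then ε else 0) - (if l = k then ε else 0) with hw
  have inner : ∀ i, ∑ l, w i * A i l * w l
      = w i * ((∑ l, u l * A i l) + ε * A i j - ε * A i k) := by
    intro i
    have : ∑ l, A i l * w l = (∑ l, u l * A i l) + ε * A i j - ε * A i k := by
      rw [show ∑ l, A i l * w l = ∑ l, w l * A i l from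
        Finset.sum_congr rfl fun l _ => mul_comm _ _]
      exact sum_perturb u (fun l => A i l) j k ε
    rw [← this, Finset.mul_sum]
    exact Finset.sum_congr rfl fun l _ => by ring
  rw [Finset.sum_congr rfl fun i _ => inner i]
  rw [sum_perturb u (fun i => (∑ l, u l * A i l) + ε * A i j - ε * A i k) j k ε]
  have e1 : ∑ i, u i * ((∑ l, u l * A i l) + ε * A i j - ε * A i k)
      = (∑ i, ∑ l, u i * A i l * u l) + ε * (∑ i, u i * A i j) - ε * (∑ i, u i * A i k) := by
    rw [show (∑ i, ∑ l, u i * A i l * u l) = ∑ i, u i * (∑ l, u l * A i l) from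
      Finset.sum_congr rfl fun i _ => by
        rw [Finset.mul_sum]; exact Finset.sum_congr rfl fun l _ => by ring,
      Finset.mul_sum, Finset.mul_sum, ← Finset.sum_add_distrib, ← Finset.sum_sub_distrib]
    exact Finset.sum_congr rfl fun i _ => by ring
  rw [e1]
  have hsj : (∑ l, u l * A j l) = ∑ i, u i * A i j :=
    Finset.sum_congr rfl fun l _ => by rw [hsymm j l]
  have hsk : (∑ l, u l * A k l) = ∑ i, u i * A i k :=
    Finset.sum_congr rfl fun l _ => by rw [hsymm k l]
  rw [hsj, hsk, hdiag j, hdiag k, hsymm k j]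
  ring

lemma restrict_contra {m : ℕ} (A : Fin m → Fin m → ℝ) (hdense : IsDenseMatrix A)
    (j : Fin m) (w : Fin m → ℝ) (h0 : ∀ i, 0 ≤ w i) (h1 : ∑ i, w i = 1)
    (hwj : w j = 0) (hq : ∑ i, ∑ l, w i * A i l * w l = lagrangian A) : False := by
  have hmem : ∀ x : Fin m, x ∈ univ.erase j ↔ x ≠ j := by
    intro x; simp [Finset.mem_erase]
  have hv1 : ∑ i : {x : Fin m // x ≠ j}, w i.1 = 1 := by
    rw [← Finset.sum_subtype (univ.erase j) hmem w, Finset.sum_erase _ hwj, h1]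
  have hvq : lagrangian A
      = ∑ i : {x : Fin m // x ≠ j}, ∑ l : {x : Fin m // x ≠ j}, w i.1 * A i.1 l.1 * w l.1 := by
    rw [← hq]
    rw [show (∑ i, ∑ l, w i * A i l * w l)
        = ∑ i ∈ univ.erase j, ∑ l ∈ univ.erase j, w i * A i l * w l from ?_]
    · rw [Finset.sum_subtype (univ.erase j) hmem
        (fun i => ∑ l ∈ univ.erase j, w i * A i l * w l)]
      exact Finset.sum_congr rfl fun i _ =>
        (Finset.sum_subtype (univ.erase j) hmem (fun l => w i.1 * A i.1 l * w l))
    · rw [Finset.sum_erase _ (by simp [hwj])]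
      exact Finset.sum_congr rfl fun i _ => (Finset.sum_erase _ (by simp [hwj])).symm
  have hle : lagrangian A ≤ lagrangian (fun a b : {x : Fin m // x ≠ j} => A a.1 b.1) := by
    rw [hvq]
    exact le_lag (fun a b : {x : Fin m // x ≠ j} => A a.1 b.1) (fun i => w i.1)
      (fun i => h0 i.1) hv1
  refine absurd (hdense.2 j) (not_lt.mpr ?_)
  convert hle using 2
  rfl

theorem dense_matrix_optimal_vector (m : ℕ) (A : Fin m → Fin m → ℝ)
    (hsymm : ∀ i j, A i j = A j i) (hnonneg : ∀ i j, 0 ≤ A i j)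
    (hdense : IsDenseMatrix A)
    (u : Fin m → ℝ) (hu0 : ∀ i, 0 ≤ u i) (hu1 : ∑ i, u i = 1)
    (hopt : ∑ i, ∑ j, u i * A i j * u j = lagrangian A) :
    (∀ i j : Fin m, i < j → 0 < A i j) ∧
    (∀ i, 0 < u i) ∧
    (∀ j : Fin m, ∑ i ∈ univ.filter (· ≠ j), A i j * u i = lagrangian A) := by
  have hdiag := hdense.1
  -- (b)
  have hb : ∀ i, 0 < u i := by
    intro i
    rcases (hu0 i).lt_or_eq with h | h
    · exact h
    · exact (restrict_contra A hdense i u hu0 hu1 h.symm hopt).elim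
  -- r
  set r : Fin m → ℝ := fun j => ∑ i, u i * A i j with hr
  have hqr : ∑ l, u l * r l = lagrangian A := by
    rw [← hopt, Finset.sum_comm]
    refine Finset.sum_congr rfl fun l _ => ?_
    rw [hr, Finset.mul_sum]
    exact Finset.sum_congr rfl fun i _ => by ring
  have hrle : ∀ j k : Fin m, r j ≤ r k := by
    intro j k
    by_contra h
    push_neg at h
    have hjk : j ≠ k := fun e => absurd (e ▸ h) (lt_irrefl _)
    have hd : 0 < r j - r k := by linarith
    have hc : 0 ≤ A j k := hnonneg j k
    set d := r j - r k with hdd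
    set c := A j k with hcc
    set ε := min (u k) (d / (2 * (c + 1))) with hε
    have hε0 : 0 < ε := lt_min (hb k) (by positivity)
    have hεk : ε ≤ u k := min_le_left _ _
    have h3 : ε * (2 * (c + 1)) ≤ d :=
      (le_div_iff₀ (by positivity)).mp (min_le_right _ _)
    have hεc : ε * c < d := by nlinarith
    set w : Fin m → ℝ :=
      fun l => u l + (if l = j then ε else 0) - (if l = k then ε else 0) with hw
    have hw0 : ∀ l, 0 ≤ w l := by
      intro l
      rcases eq_or_ne l j with rfl | hlj
      · simp [hw, hjk]
        linarith [hu0 l, hε0.le]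
      · rcases eq_or_ne l k with rfl | hlk
        · simp [hw, hlj]
          linarith [hεk]
        · simp [hw, hlj, hlk]
          exact hu0 l
    have hw1 : ∑ l, w l = 1 := by
      simp [hw, Finset.sum_add_distrib, Finset.sum_sub_distrib,
        Finset.sum_ite_eq', Finset.mem_univ, hu1]
    have hqw := q_perturb A hsymm hdiag u j k ε
    have hle := le_lag A w hw0 hw1
    rw [hqw, hopt] at hle
    nlinarith [mul_pos hε0 (by linarith : (0:ℝ) < d - ε * c)]
  have hreq : ∀ j k : Fin m, r j = r k := fun j k => le_antisymm (hrle j k) (hrle k j)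
  have hrg : ∀ j, r j = lagrangian A := by
    intro j
    have : ∑ l, u l * r l = r j := by
      rw [show (∑ l, u l * r l) = ∑ l, u l * r j from
        Finset.sum_congr rfl fun l _ => by rw [hreq l j],
        ← Finset.sum_mul, hu1, one_mul]
    linarith [hqr, this]
  refine ⟨?_, hb, ?_⟩
  · -- (a)
    intro i j hij
    rcases (hnonneg i j).lt_or_eq with h | h
    · exact h
    have h0 : A i j = 0 := h.symm
    have hij' : i ≠ j := ne_of_lt hij
    set w : Fin m → ℝ :=
      fun l => u l + (if l = i then u j else 0) - (if l = j then u j else 0) with hw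
    have hw0 : ∀ l, 0 ≤ w l := by
      intro l
      rcases eq_or_ne l i with rfl | hli
      · simp [hw, hij']
        linarith [hu0 l, hu0 j]
      · rcases eq_or_ne l j with rfl | hlj
        · simp [hw, hli]
        · simp [hw, hli, hlj]
          exact hu0 l
    have hw1 : ∑ l, w l = 1 := by
      simp [hw, Finset.sum_add_distrib, Finset.sum_sub_distrib,
        Finset.sum_ite_eq', Finset.mem_univ, hu1]
    have hwj : w j = 0 := by simp [hw, hij'.symm]
    have hSS : (∑ a : Fin m, u a * A a i) = (∑ a : Fin m, u a * A a j) := hreq i j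
    have hq2 : ∑ i', ∑ l, w i' * A i' l * w l = lagrangian A := by
      simp only [hw]
      rw [q_perturb A hsymm hdiag u i j (u j), hopt, hSS, sub_self, mul_zero, h0]
      ring
    exact (restrict_contra A hdense j w hw0 hw1 hwj hq2).elim
  · -- (c)
    intro j
    rw [Finset.filter_ne', Finset.sum_erase _ (by simp [hdiag j])]
    rw [show (∑ i, A i j * u i) = r j from
      Finset.sum_congr rfl fun i _ => mul_comm _ _]
    exact hrg j
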